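/- arXiv:1103.5575 — 2 statements merged into one kernel-verified Lean document; each statement's English description precedes it below -/
import Mathlib

section
/- Let 0 < p_a < p_b, b ∈ ℝ, c ≥ 0, and let F be a Lévy measure on ℝ with F((−∞,−1]) = 0 such that ∫_{(1,∞)} x dF(x) < ∞ and ∫_{(1,∞)} (1+x)^{1−q} dF(x) < ∞ for every q ∈ (p_a, p_b). Define G(π,p) := πb − pπ²c + ∫_{(−1,∞)} (πx(1+πx)^{−p} − πx) dF(x). Then for every π₀ ≠ 0 in the interior of A := {π ∈ ℝ : F({x : 1 + πx ≤ 0}) = 0}, the map p ↦ G(π₀,p) is differentiable on (p_a, p_b) with derivative −π₀²c − ∫_{(−1,∞)} π₀x (1+π₀x)^{−p} log(1+π₀x) dF(x); this derivative is ≤ −π₀²c, and in particular strictly negative when c > 0. -/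
open MeasureTheory Set Filter
open scoped ENNReal Topology

lemma aux_abs_log_le {δ u : ℝ} (hδ0 : 0 < δ) (hδ1 : δ ≤ 1) (hu : δ ≤ u) :
    |Real.log u| ≤ |u - 1| / δ := by
  have hu0 : 0 < u := lt_of_lt_of_le hδ0 hu
  rcases le_or_gt 1 u with h | h
  · rw [abs_of_nonneg (Real.log_nonneg h), abs_of_nonneg (by linarith)]
    have h2 := Real.log_le_sub_one_of_pos hu0
    rw [le_div_iff₀ hδ0]
    nlinarith [Real.log_nonneg h]
  · rw [abs_of_nonpos (Real.log_nonpos hu0.le h.le), abs_of_nonpos (by linarith)]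
    have h2 := Real.log_le_sub_one_of_pos (inv_pos.2 hu0)
    rw [Real.log_inv] at h2
    rw [le_div_iff₀ hδ0]
    have h3 : u⁻¹ - 1 = (1 - u) / u := by field_simp
    rw [h3, le_div_iff₀ hu0] at h2
    have h5 : 0 ≤ -Real.log u := neg_nonneg.2 (Real.log_nonpos hu0.le h.le)
    nlinarith [mul_nonneg h5 (by linarith : (0:ℝ) ≤ u - δ)]

lemma aux_abs_exp_sub_one (s : ℝ) : |Real.exp s - 1| ≤ |s| * Real.exp |s| := by
  rcases le_or_gt 0 s with h | h
  · rw [abs_of_nonneg h, abs_of_nonneg (by nlinarith [Real.add_one_le_exp s] : (0:ℝ) ≤ Real.exp s - 1)]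
    have h1 := Real.add_one_le_exp (-s)
    have h2 := Real.exp_pos s
    have h3 : Real.exp s * Real.exp (-s) = 1 := by rw [← Real.exp_add]; simp
    nlinarith [mul_le_mul_of_nonneg_left h1 h2.le]
  · rw [abs_of_neg h]
    have h1 := Real.add_one_le_exp s
    have h2 : |Real.exp s - 1| = 1 - Real.exp s := by
      rw [abs_of_nonpos]; ring
      nlinarith [Real.exp_lt_one_iff.mpr h]
    rw [h2]
    nlinarith [Real.exp_pos (-s), Real.one_le_exp (le_of_lt (neg_pos.2 h)), Real.exp_pos s]

set_option maxHeartbeats 2000000 in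
theorem stmt13 (pa pb b c : ℝ) (hpa : 0 < pa) (hab : pa < pb) (hc : 0 ≤ c)
    (F : Measure ℝ)
    (hF0 : F {0} = 0)
    (hFlevy : ∫⁻ x, ENNReal.ofReal (min (x ^ 2) 1) ∂F ≠ ∞)
    (hFneg : F (Iic (-1 : ℝ)) = 0)
    (hFx : IntegrableOn (fun x => x) (Ioi (1 : ℝ)) F)
    (hFq : ∀ q ∈ Ioo pa pb, IntegrableOn (fun x => (1 + x) ^ (1 - q)) (Ioi (1 : ℝ)) F) :
    ∀ π₀ ∈ interior {π : ℝ | F {x | 1 + π * x ≤ 0} = 0}, π₀ ≠ 0 →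
      ∀ p ∈ Ioo pa pb,
        IntegrableOn (fun x => π₀ * x * (1 + π₀ * x) ^ (-p) * Real.log (1 + π₀ * x))
          (Ioi (-1 : ℝ)) F ∧
        HasDerivAt
          (fun q => π₀ * b - q * π₀ ^ 2 * c +
            ∫ x in Ioi (-1 : ℝ), (π₀ * x * (1 + π₀ * x) ^ (-q) - π₀ * x) ∂F)
          (-π₀ ^ 2 * c -
            ∫ x in Ioi (-1 : ℝ), π₀ * x * (1 + π₀ * x) ^ (-p) * Real.log (1 + π₀ * x) ∂F) p ∧
        (-π₀ ^ 2 * c -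
            ∫ x in Ioi (-1 : ℝ), π₀ * x * (1 + π₀ * x) ^ (-p) * Real.log (1 + π₀ * x) ∂F
          ≤ -π₀ ^ 2 * c) ∧
        (0 < c →
          -π₀ ^ 2 * c -
            ∫ x in Ioi (-1 : ℝ), π₀ * x * (1 + π₀ * x) ^ (-p) * Real.log (1 + π₀ * x) ∂F
          < 0) := by
  intro π₀ hπ₀int hπ₀ p hp
  obtain ⟨hpap, hppb⟩ := hp
  have hπ₀abs : 0 < |π₀| := abs_pos.2 hπ₀
  -- a.e. lower bound δ for 1 + π₀ x
  obtain ⟨δ, hδ0, hδ1, hae⟩ :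
      ∃ δ : ℝ, 0 < δ ∧ δ < 1 ∧ ∀ᵐ x ∂F, δ ≤ 1 + π₀ * x := by
    have hS : interior {π : ℝ | F {x | 1 + π * x ≤ 0} = 0} ∈ 𝓝 π₀ :=
      isOpen_interior.mem_nhds hπ₀int
    obtain ⟨r, hr0, hball⟩ := Metric.mem_nhds_iff.1 hS
    set s : ℝ := r / (2 * |π₀|) with hs_def
    have hs0 : 0 < s := by positivity
    set π₁ : ℝ := π₀ * (1 + s) with hπ₁_def
    have hπ₁mem : π₁ ∈ Metric.ball π₀ r := by
      simp only [Metric.mem_ball, Real.dist_eq]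
      rw [show π₁ - π₀ = π₀ * s from by rw [hπ₁_def]; ring, abs_mul]
      rw [hs_def, abs_of_nonneg (by positivity : (0:ℝ) ≤ r / (2 * |π₀|))]
      have h1 : |π₀| * (r / (2 * |π₀|)) = r / 2 := by field_simp
      rw [h1]; linarith
    have hπ₁A : F {x | 1 + π₁ * x ≤ 0} = 0 :=
      (interior_subset (hball hπ₁mem) : π₁ ∈ {π : ℝ | F {x | 1 + π * x ≤ 0} = 0})
    have h1s : (0:ℝ) < 1 + s := by linarith
    refine ⟨s / (1 + s), by positivity, by rw [div_lt_one h1s]; linarith, ?_⟩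
    rw [ae_iff]
    refine measure_mono_null (fun x hx => ?_) hπ₁A
    simp only [mem_setOf_eq, not_le] at hx ⊢
    by_contra h'
    push_neg at h'
    have hkey : 1 + π₀ * x = s / (1 + s) + (1/(1+s)) * (1 + π₁ * x) := by
      rw [hπ₁_def]; field_simp; ring
    nlinarith [mul_pos (by positivity : (0:ℝ) < 1/(1+s)) h']
  set μ := F.restrict (Ioi (-1:ℝ)) with hμ_def
  have haeμ : ∀ᵐ x ∂μ, δ ≤ 1 + π₀ * x := ae_restrict_of_ae hae
  have hxμ : ∀ᵐ x ∂μ, x ∈ Ioi (-1:ℝ) := ae_restrict_mem measurableSet_Ioi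
  -- exponent parameters
  obtain ⟨q, p₁, p₂, hpaq, hqp₁, hp₁p, hpp₂, hp₂pb⟩ :
      ∃ q p₁ p₂ : ℝ, pa < q ∧ q < p₁ ∧ p₁ < p ∧ p < p₂ ∧ p₂ < pb :=
    ⟨(pa + p)/2, ((pa + p)/2 + p)/2, (p + pb)/2, by constructor <;> [linarith; exact ⟨by linarith, by linarith, by linarith, by linarith⟩]⟩
  have hq0 : 0 < q := by linarith
  have hp₁0 : 0 < p₁ := by linarith
  have hp₁q : 0 < p₁ - q := by linarith
  obtain ⟨ε, hε, hball_r⟩ :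
      ∃ ε : ℝ, 0 < ε ∧ ∀ r' ∈ Metric.ball p ε, p₁ ≤ r' ∧ r' ≤ p₂ := by
    refine ⟨min (p - p₁) (p₂ - p), lt_min (by linarith) (by linarith), fun r' hr' => ?_⟩
    simp only [Metric.mem_ball, Real.dist_eq] at hr'
    have h1 := abs_lt.1 hr'
    have h2 : min (p - p₁) (p₂ - p) ≤ p - p₁ := min_le_left _ _
    have h3 : min (p - p₁) (p₂ - p) ≤ p₂ - p := min_le_right _ _
    constructor <;> linarith [h1.1, h1.2]
  -- constants
  obtain ⟨M, hM2, hMπ⟩ : ∃ M : ℝ, 2 ≤ M ∧ 1 + |π₀| ≤ M :=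
    ⟨max 2 (1 + |π₀|), le_max_left _ _, le_max_right _ _⟩
  obtain ⟨K, hK0, hKl, hKr⟩ : ∃ K : ℝ, 0 ≤ K ∧ π₀^2 ≤ K ∧ (M-1)^2 ≤ K :=
    ⟨max (π₀^2) ((M-1)^2), le_trans (sq_nonneg π₀) (le_max_left _ _),
      le_max_left _ _, le_max_right _ _⟩
  -- general sub-facts
  have hpow_gen : ∀ u : ℝ, δ ≤ u → ∀ r', 0 ≤ r' → r' ≤ p₂ → u^(-r') ≤ δ^(-p₂) := by
    intro u hu r' h0 h2
    calc u^(-r') ≤ δ^(-r') := Real.rpow_le_rpow_of_nonpos hδ0 hu (by linarith)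
      _ ≤ δ^(-p₂) := Real.rpow_le_rpow_of_exponent_ge hδ0 hδ1.le (by linarith)
  have hsq_gen : ∀ x : ℝ, δ ≤ 1 + π₀ * x → 1 + π₀ * x ≤ M →
      (π₀ * x)^2 ≤ K * min (x^2) 1 := by
    intro x hu hM'
    rcases le_or_gt (x^2) 1 with h | h
    · rw [min_eq_left h]
      nlinarith [sq_nonneg x]
    · rw [min_eq_right h.le]
      have h1 : π₀ * x ≤ M - 1 := by linarith
      have h2 : -(M-1) ≤ π₀ * x := by nlinarith
      have h3 : (π₀ * x)^2 ≤ (M-1)^2 := sq_le_sq' h2 h1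
      linarith
  have hbig : ∀ x : ℝ, -1 < x → M < 1 + π₀ * x → 0 < π₀ ∧ 1 < x := by
    intro x hx hM'
    have h2 : M - 1 < π₀ * x := by linarith
    have hπpos : 0 < π₀ := by
      rcases hπ₀.lt_or_gt with hneg | hpos
      · exfalso
        rw [abs_of_neg hneg] at hMπ
        nlinarith
      · exact hpos
    refine ⟨hπpos, ?_⟩
    rw [abs_of_pos hπpos] at hMπ
    nlinarith
  obtain ⟨Cπ, hCπ0, hcp_gen⟩ :
      ∃ Cπ : ℝ, 0 ≤ Cπ ∧ ∀ x : ℝ, 1 < x → 0 < π₀ →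
        (1 + π₀ * x)^(1-q) ≤ Cπ * (1+x)^(1-q) := by
    refine ⟨max ((max 1 π₀) ^ (1-q)) ((min 1 π₀) ^ (1-q)),
      le_trans (Real.rpow_nonneg (by positivity : (0:ℝ) ≤ max 1 π₀) _) (le_max_left _ _),
      fun x hx1 hπpos => ?_⟩
    have hx0 : (0:ℝ) < 1 + x := by linarith
    have hu0 : (0:ℝ) < 1 + π₀ * x := by nlinarith
    rcases le_or_gt 0 (1-q) with hq1 | hq1
    · have h1a : (1:ℝ) ≤ max 1 π₀ := le_max_left _ _
      have h1b : π₀ ≤ max 1 π₀ := le_max_right _ _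
      have h1 : 1 + π₀ * x ≤ max 1 π₀ * (1+x) := by nlinarith
      calc (1 + π₀ * x)^(1-q) ≤ (max 1 π₀ * (1+x))^(1-q) :=
            Real.rpow_le_rpow hu0.le h1 hq1
        _ = (max 1 π₀)^(1-q) * (1+x)^(1-q) := Real.mul_rpow (by positivity) hx0.le
        _ ≤ _ := by
            have h2 : (max 1 π₀)^(1-q) ≤ max ((max 1 π₀) ^ (1-q)) ((min 1 π₀) ^ (1-q)) :=
              le_max_left _ _
            have h3 := Real.rpow_nonneg hx0.le (1-q)
            nlinarith
    · have hmin0 : 0 < min 1 π₀ := lt_min one_pos hπpos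
      have h1a : min 1 π₀ ≤ 1 := min_le_left _ _
      have h1b : min 1 π₀ ≤ π₀ := min_le_right _ _
      have h1 : min 1 π₀ * (1+x) ≤ 1 + π₀ * x := by nlinarith
      calc (1 + π₀ * x)^(1-q) ≤ (min 1 π₀ * (1+x))^(1-q) :=
            Real.rpow_le_rpow_of_nonpos (by positivity) h1 hq1.le
        _ = (min 1 π₀)^(1-q) * (1+x)^(1-q) := Real.mul_rpow hmin0.le hx0.le
        _ ≤ _ := by
            have h2 : (min 1 π₀)^(1-q) ≤ max ((max 1 π₀) ^ (1-q)) ((min 1 π₀) ^ (1-q)) :=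
              le_max_right _ _
            have h3 := Real.rpow_nonneg hx0.le (1-q)
            nlinarith
  have hind_nonneg : ∀ x : ℝ, 0 ≤ (Ioi (1:ℝ)).indicator (fun y => (1+y)^(1-q)) x := by
    intro x
    apply indicator_nonneg
    intro y hy
    exact Real.rpow_nonneg (by simp only [mem_Ioi] at hy; linarith) _
  have hmin_nonneg : ∀ x : ℝ, 0 ≤ min (x^2) 1 := fun x => le_min (sq_nonneg x) zero_le_one
  -- key bound for the derivative integrand
  have key : ∀ x ∈ Ioi (-1:ℝ), δ ≤ 1 + π₀ * x → ∀ r', p₁ ≤ r' → r' ≤ p₂ →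
      |π₀ * x * (1 + π₀ * x) ^ (-r') * Real.log (1 + π₀ * x)| ≤
        K * δ ^ (-(p₂+1)) * min (x^2) 1 +
          (Cπ/(p₁-q)) * (Ioi (1:ℝ)).indicator (fun y => (1+y)^(1-q)) x := by
    intro x hx hu r' hr1 hr2
    have hx' : (-1:ℝ) < x := hx
    have hu0 : (0:ℝ) < 1 + π₀ * x := lt_of_lt_of_le hδ0 hu
    have hr'0 : 0 < r' := lt_of_lt_of_le hp₁0 hr1
    have habs : |π₀ * x * (1 + π₀ * x) ^ (-r') * Real.log (1 + π₀ * x)| =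
        |π₀ * x| * (1 + π₀ * x) ^ (-r') * |Real.log (1 + π₀ * x)| := by
      rw [abs_mul, abs_mul, abs_of_nonneg (Real.rpow_nonneg hu0.le _)]
    rw [habs]
    rcases le_or_gt (1 + π₀ * x) M with hM | hM
    · have hlog : |Real.log (1 + π₀ * x)| ≤ |π₀ * x| / δ := by
        have h0 := aux_abs_log_le hδ0 hδ1.le hu
        rwa [show (1 + π₀ * x) - 1 = π₀ * x from by ring] at h0
      have hpow : (1 + π₀ * x) ^ (-r') ≤ δ^(-p₂) := hpow_gen _ hu r' hr'0.le hr2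
      have hsq : (π₀ * x)^2 ≤ K * min (x^2) 1 := hsq_gen x hu hM
      have hstep : |π₀ * x| * (1 + π₀ * x) ^ (-r') * |Real.log (1 + π₀ * x)| ≤
          |π₀ * x| * δ^(-p₂) * (|π₀ * x| / δ) := by
        apply mul_le_mul (mul_le_mul_of_nonneg_left hpow (abs_nonneg _)) hlog (abs_nonneg _)
        exact mul_nonneg (abs_nonneg _) (Real.rpow_nonneg hδ0.le _)
      have heq2 : |π₀ * x| * δ^(-p₂) * (|π₀ * x| / δ) = (π₀*x)^2 * (δ^(-p₂)/δ) := by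
        rw [show |π₀ * x| * δ^(-p₂) * (|π₀ * x| / δ) = |π₀*x| * |π₀*x| * (δ^(-p₂)/δ) from by
          ring, abs_mul_abs_self]
        ring
      have hδpow : δ^(-p₂)/δ = δ^(-(p₂+1)) := by
        rw [show -(p₂+1) = -p₂ + (-1) from by ring, Real.rpow_add hδ0, Real.rpow_neg_one]
        ring
      have hfin : (π₀*x)^2 * (δ^(-p₂)/δ) ≤ K * δ ^ (-(p₂+1)) * min (x^2) 1 := by
        rw [hδpow]
        have h5 : 0 ≤ δ^(-(p₂+1)) := Real.rpow_nonneg hδ0.le _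
        nlinarith [mul_le_mul_of_nonneg_right hsq h5]
      have hind := mul_nonneg (div_nonneg hCπ0 hp₁q.le) (hind_nonneg x)
      calc |π₀ * x| * (1 + π₀ * x) ^ (-r') * |Real.log (1 + π₀ * x)|
          ≤ |π₀ * x| * δ^(-p₂) * (|π₀ * x| / δ) := hstep
        _ = (π₀*x)^2 * (δ^(-p₂)/δ) := heq2
        _ ≤ K * δ ^ (-(p₂+1)) * min (x^2) 1 := hfin
        _ ≤ _ := le_add_of_nonneg_right hind
    · obtain ⟨hπpos, hx1⟩ := hbig x hx' hM
      have hu1 : (1:ℝ) < 1 + π₀ * x := by linarith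
      have hπx0 : 0 ≤ π₀ * x := by nlinarith
      have hlogu : 0 ≤ Real.log (1 + π₀ * x) := Real.log_nonneg hu1.le
      have hlog2 : Real.log (1 + π₀ * x) ≤ (1 + π₀ * x)^(p₁-q) / (p₁-q) := by
        have h1 : Real.log ((1 + π₀ * x) ^ (p₁-q)) ≤ (1 + π₀ * x)^(p₁-q) - 1 :=
          Real.log_le_sub_one_of_pos (Real.rpow_pos_of_pos hu0 _)
        rw [Real.log_rpow hu0] at h1
        rw [le_div_iff₀ hp₁q]
        nlinarith
      have hpow2 : (1 + π₀ * x)^(-r') ≤ (1 + π₀ * x)^(-p₁) :=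
        Real.rpow_le_rpow_of_exponent_le hu1.le (by linarith)
      have habs2 : |π₀ * x| = π₀ * x := abs_of_nonneg hπx0
      have hlog3 : |Real.log (1 + π₀ * x)| = Real.log (1 + π₀ * x) := abs_of_nonneg hlogu
      have hcomb : |π₀ * x| * (1 + π₀ * x) ^ (-r') * |Real.log (1 + π₀ * x)| ≤
          (1 + π₀ * x) * (1 + π₀ * x)^(-p₁) * ((1 + π₀ * x)^(p₁-q) / (p₁-q)) := by
        rw [habs2, hlog3]
        apply mul_le_mul ?_ hlog2 hlogu ?_
        · apply mul_le_mul (by linarith) hpow2 (Real.rpow_nonneg hu0.le _) (by linarith)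
        · exact mul_nonneg (by linarith) (Real.rpow_nonneg hu0.le _)
      have heq3 : (1 + π₀ * x) * (1 + π₀ * x)^(-p₁) * ((1 + π₀ * x)^(p₁-q) / (p₁-q)) =
          (1 + π₀ * x)^(1-q) / (p₁-q) := by
        have h4 : (1 + π₀ * x) * (1 + π₀ * x)^(-p₁) * (1 + π₀ * x)^(p₁-q) =
            (1 + π₀ * x)^(1-q) := by
          rw [show (1:ℝ) - q = 1 + -p₁ + (p₁ - q) from by ring, Real.rpow_add hu0,
            Real.rpow_add hu0, Real.rpow_one]
        rw [← h4]; ring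
      have hcp := hcp_gen x hx1 hπpos
      have hindx : (Ioi (1:ℝ)).indicator (fun y => (1+y)^(1-q)) x = (1+x)^(1-q) :=
        indicator_of_mem hx1 _
      have hfirst : 0 ≤ K * δ ^ (-(p₂+1)) * min (x^2) 1 :=
        mul_nonneg (mul_nonneg hK0 (Real.rpow_nonneg hδ0.le _)) (hmin_nonneg x)
      calc |π₀ * x| * (1 + π₀ * x) ^ (-r') * |Real.log (1 + π₀ * x)|
          ≤ (1 + π₀ * x)^(1-q) / (p₁-q) := by rw [← heq3]; exact hcomb
        _ ≤ (Cπ * (1+x)^(1-q)) / (p₁-q) := by gcongr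
        _ = (Cπ/(p₁-q)) * (1+x)^(1-q) := by ring
        _ ≤ _ := by rw [hindx]; linarith [hfirst]
  -- key bound for the function itself
  obtain ⟨E, hE0, hEM, hEδ⟩ : ∃ E : ℝ, 0 ≤ E ∧ M^p₂ ≤ E ∧ δ^(-p₂) ≤ E :=
    ⟨max (M^p₂) (δ^(-p₂)), le_trans (Real.rpow_nonneg (by linarith) _) (le_max_left _ _),
      le_max_left _ _, le_max_right _ _⟩
  have key2 : ∀ x ∈ Ioi (-1:ℝ), δ ≤ 1 + π₀ * x →
      |π₀ * x * (1 + π₀ * x) ^ (-p) - π₀ * x| ≤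
        (K * (p₂ * E / δ)) * min (x^2) 1 +
          (Ioi (1:ℝ)).indicator (fun y => Cπ * (1+y)^(1-q) + |π₀| * y) x := by
    intro x hx hu
    have hx' : (-1:ℝ) < x := hx
    have hu0 : (0:ℝ) < 1 + π₀ * x := lt_of_lt_of_le hδ0 hu
    have hfac : π₀ * x * (1 + π₀ * x) ^ (-p) - π₀ * x =
        (π₀ * x) * ((1 + π₀ * x) ^ (-p) - 1) := by ring
    rw [hfac, abs_mul]
    have hind2_nonneg : 0 ≤ (Ioi (1:ℝ)).indicator (fun y => Cπ * (1+y)^(1-q) + |π₀| * y) x := by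
      apply indicator_nonneg
      intro y hy
      simp only [mem_Ioi] at hy
      have h6 := Real.rpow_nonneg (by linarith : (0:ℝ) ≤ 1+y) (1-q)
      have h7 := abs_nonneg π₀
      nlinarith
    rcases le_or_gt (1 + π₀ * x) M with hM | hM
    · have hlog : |Real.log (1 + π₀ * x)| ≤ |π₀ * x| / δ := by
        have h0 := aux_abs_log_le hδ0 hδ1.le hu
        rwa [show (1 + π₀ * x) - 1 = π₀ * x from by ring] at h0
      have hrpdef : (1 + π₀ * x) ^ (-p) = Real.exp (-p * Real.log (1 + π₀ * x)) := by
        rw [Real.rpow_def_of_pos hu0]; ring_nf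
      have hexp := aux_abs_exp_sub_one (-p * Real.log (1 + π₀ * x))
      have hsabs : |(-p) * Real.log (1 + π₀ * x)| = p * |Real.log (1 + π₀ * x)| := by
        rw [abs_mul, abs_neg, abs_of_pos (by linarith : (0:ℝ) < p)]
      have hexpb : Real.exp |(-p) * Real.log (1 + π₀ * x)| ≤ E := by
        rw [hsabs]
        rcases le_or_gt 0 (Real.log (1 + π₀ * x)) with hl | hl
        · rw [abs_of_nonneg hl]
          have h6 : Real.exp (p * Real.log (1 + π₀ * x)) = (1 + π₀ * x)^p := by
            rw [Real.rpow_def_of_pos hu0, mul_comm]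
          rw [h6]
          calc (1 + π₀ * x)^p ≤ M^p := Real.rpow_le_rpow hu0.le hM (by linarith)
            _ ≤ M^p₂ := Real.rpow_le_rpow_of_exponent_le (by linarith) (by linarith)
            _ ≤ E := hEM
        · rw [abs_of_neg hl]
          have h7 : Real.exp (p * -Real.log (1 + π₀ * x)) = (1 + π₀ * x)^(-p) := by
            rw [Real.rpow_def_of_pos hu0,
              show Real.log (1 + π₀ * x) * -p = p * -Real.log (1 + π₀ * x) from by ring]
          rw [h7]
          exact le_trans (hpow_gen _ hu p (by linarith) (by linarith)) hEδ
      have hs1 : |(1 + π₀ * x) ^ (-p) - 1| ≤ (p * (|π₀ * x| / δ)) * E := by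
        rw [hrpdef]
        calc |Real.exp (-p * Real.log (1 + π₀ * x)) - 1|
            ≤ |(-p) * Real.log (1 + π₀ * x)| * Real.exp |(-p) * Real.log (1 + π₀ * x)| := hexp
          _ ≤ (p * (|π₀ * x| / δ)) * E := by
              apply mul_le_mul ?_ hexpb (Real.exp_nonneg _) ?_
              · rw [hsabs]
                exact mul_le_mul_of_nonneg_left hlog (by linarith)
              · exact mul_nonneg (by linarith) (div_nonneg (abs_nonneg _) hδ0.le)
      have hsq : (π₀ * x)^2 ≤ K * min (x^2) 1 := hsq_gen x hu hM
      calc |π₀ * x| * |(1 + π₀ * x) ^ (-p) - 1|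
          ≤ |π₀ * x| * ((p * (|π₀ * x| / δ)) * E) := mul_le_mul_of_nonneg_left hs1 (abs_nonneg _)
        _ = |π₀*x| * |π₀*x| * (p * E / δ) := by ring
        _ = (π₀*x)^2 * (p * E / δ) := by rw [abs_mul_abs_self]; ring
        _ ≤ (π₀*x)^2 * (p₂ * E / δ) := by
            apply mul_le_mul_of_nonneg_left ?_ (sq_nonneg _)
            gcongr
        _ ≤ (K * min (x^2) 1) * (p₂ * E / δ) := by
            apply mul_le_mul_of_nonneg_right hsq
            exact div_nonneg (mul_nonneg (by linarith) hE0) hδ0.le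
        _ = (K * (p₂ * E / δ)) * min (x^2) 1 := by ring
        _ ≤ _ := le_add_of_nonneg_right hind2_nonneg
    · obtain ⟨hπpos, hx1⟩ := hbig x hx' hM
      have hu1 : (1:ℝ) < 1 + π₀ * x := by linarith
      have hπx0 : 0 ≤ π₀ * x := by nlinarith
      have h8 : |(1 + π₀ * x) ^ (-p) - 1| ≤ (1 + π₀ * x) ^ (-p) + 1 := by
        have h := abs_add_le ((1 + π₀ * x) ^ (-p)) (-1)
        rw [abs_neg, abs_one, abs_of_nonneg (Real.rpow_nonneg hu0.le _)] at h
        simpa [sub_eq_add_neg] using h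
      have h9 : |π₀ * x| * |(1 + π₀ * x) ^ (-p) - 1| ≤
          (1 + π₀ * x) * (1 + π₀ * x)^(-p) + |π₀| * x := by
        rw [abs_of_nonneg hπx0]
        calc (π₀ * x) * |(1 + π₀ * x) ^ (-p) - 1|
            ≤ (π₀ * x) * ((1 + π₀ * x) ^ (-p) + 1) := mul_le_mul_of_nonneg_left h8 hπx0
          _ = (π₀ * x) * (1 + π₀ * x)^(-p) + π₀ * x := by ring
          _ ≤ (1 + π₀ * x) * (1 + π₀ * x)^(-p) + |π₀| * x := by
              have h11 : (π₀ * x) * (1 + π₀ * x)^(-p) ≤ (1 + π₀ * x) * (1 + π₀ * x)^(-p) :=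
                mul_le_mul_of_nonneg_right (by linarith) (Real.rpow_nonneg hu0.le _)
              have h12 : π₀ * x ≤ |π₀| * x := by rw [abs_of_pos hπpos]
              linarith
      have h13 : (1 + π₀ * x) * (1 + π₀ * x)^(-p) = (1 + π₀ * x)^(1-p) := by
        rw [show (1:ℝ) - p = 1 + -p from by ring, Real.rpow_add hu0, Real.rpow_one]
      have h14 : (1 + π₀ * x)^(1-p) ≤ (1 + π₀ * x)^(1-q) :=
        Real.rpow_le_rpow_of_exponent_le hu1.le (by linarith)
      have hcp := hcp_gen x hx1 hπpos
      have hindx : (Ioi (1:ℝ)).indicator (fun y => Cπ * (1+y)^(1-q) + |π₀| * y) x =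
          Cπ * (1+x)^(1-q) + |π₀| * x := indicator_of_mem hx1 _
      have hfirst : 0 ≤ (K * (p₂ * E / δ)) * min (x^2) 1 :=
        mul_nonneg (mul_nonneg hK0 (div_nonneg (mul_nonneg (by linarith) hE0) hδ0.le))
          (hmin_nonneg x)
      rw [h13] at h9
      rw [hindx]
      linarith [h9, h14, hcp, hfirst]
  -- measurability
  have hmeas0 : ∀ r' : ℝ, Measurable fun x : ℝ => π₀ * x * (1 + π₀ * x) ^ (-r') := by
    intro r'; fun_prop
  have hmeas1 : Measurable fun x : ℝ => 1 + π₀ * x := by fun_prop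
  have hmeasF : ∀ r' : ℝ, AEStronglyMeasurable
      (fun x => π₀ * x * (1 + π₀ * x) ^ (-r') - π₀ * x) μ := by
    intro r'
    exact (((hmeas0 r').sub (by fun_prop)).aestronglyMeasurable)
  have hmeasF' : AEStronglyMeasurable
      (fun x => -(π₀ * x * (1 + π₀ * x) ^ (-p) * Real.log (1 + π₀ * x))) μ :=
    (((hmeas0 p).mul (Real.measurable_log.comp hmeas1)).neg).aestronglyMeasurable
  -- integrability of the bounds
  have hmin_int : Integrable (fun x => min (x^2) 1) F := by
    refine ⟨((continuous_pow 2).min continuous_const).aestronglyMeasurable, ?_⟩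
    rw [hasFiniteIntegral_iff_ofReal (Eventually.of_forall hmin_nonneg)]
    exact lt_top_iff_ne_top.2 hFlevy
  have hIq : IntegrableOn (fun x => (1 + x) ^ (1 - q)) (Ioi (1:ℝ)) F :=
    hFq q ⟨hpaq, by linarith⟩
  have hind1_int : Integrable ((Ioi (1:ℝ)).indicator fun y => (1+y)^(1-q)) F :=
    hIq.integrable_indicator measurableSet_Ioi
  have hIq2 : IntegrableOn (fun y => Cπ * (1+y)^(1-q) + |π₀| * y) (Ioi (1:ℝ)) F :=
    (hIq.const_mul Cπ).add (hFx.const_mul |π₀|)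
  have hind2_int : Integrable ((Ioi (1:ℝ)).indicator fun y => Cπ * (1+y)^(1-q) + |π₀| * y) F :=
    hIq2.integrable_indicator measurableSet_Ioi
  have hbnd_int : Integrable (fun x => K * δ ^ (-(p₂+1)) * min (x^2) 1 +
      (Cπ/(p₁-q)) * (Ioi (1:ℝ)).indicator (fun y => (1+y)^(1-q)) x) μ :=
    ((hmin_int.const_mul _).add (hind1_int.const_mul _)).restrict
  have hbnd2_int : Integrable (fun x => (K * (p₂ * E / δ)) * min (x^2) 1 +
      (Ioi (1:ℝ)).indicator (fun y => Cπ * (1+y)^(1-q) + |π₀| * y) x) μ :=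
    ((hmin_int.const_mul _).add hind2_int).restrict
  have hFp_int : Integrable (fun x => π₀ * x * (1 + π₀ * x) ^ (-p) - π₀ * x) μ := by
    apply Integrable.mono' hbnd2_int (hmeasF p)
    filter_upwards [haeμ, hxμ] with x hu hx
    rw [Real.norm_eq_abs]
    exact key2 x hx hu
  have hdiff : ∀ᵐ x ∂μ, ∀ r' ∈ Metric.ball p ε,
      HasDerivAt (fun r'' => π₀ * x * (1 + π₀ * x) ^ (-r'') - π₀ * x)
        (-(π₀ * x * (1 + π₀ * x) ^ (-r') * Real.log (1 + π₀ * x))) r' := by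
    filter_upwards [haeμ] with x hu
    intro r' _
    have hu0 : (0:ℝ) < 1 + π₀ * x := lt_of_lt_of_le hδ0 hu
    have h1 : HasDerivAt (fun y : ℝ => (1 + π₀ * x) ^ y)
        ((1 + π₀ * x) ^ (-r') * Real.log (1 + π₀ * x)) (-r') :=
      (Real.hasStrictDerivAt_const_rpow hu0 (-r')).hasDerivAt
    have h2 : HasDerivAt (fun y : ℝ => -y) (-1 : ℝ) r' := (hasDerivAt_id r').neg
    have h3 : HasDerivAt (fun y : ℝ => (1 + π₀ * x) ^ (-y))
        ((1 + π₀ * x) ^ (-r') * Real.log (1 + π₀ * x) * (-1)) r' := h1.comp r' h2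
    have h4 := (h3.const_mul (π₀ * x)).sub_const (π₀ * x)
    exact h4.congr_deriv (by ring)
  have hbound : ∀ᵐ x ∂μ, ∀ r' ∈ Metric.ball p ε,
      ‖-(π₀ * x * (1 + π₀ * x) ^ (-r') * Real.log (1 + π₀ * x))‖ ≤
        K * δ ^ (-(p₂+1)) * min (x^2) 1 +
          (Cπ/(p₁-q)) * (Ioi (1:ℝ)).indicator (fun y => (1+y)^(1-q)) x := by
    filter_upwards [haeμ, hxμ] with x hu hx
    intro r' hr'
    obtain ⟨h1, h2⟩ := hball_r r' hr'
    rw [norm_neg, Real.norm_eq_abs]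
    exact key x hx hu r' h1 h2
  obtain ⟨hint, hderiv⟩ :=
    hasDerivAt_integral_of_dominated_loc_of_deriv_le (μ := μ) (x₀ := p)
      (F := fun r' x => π₀ * x * (1 + π₀ * x) ^ (-r') - π₀ * x)
      (F' := fun r' x => -(π₀ * x * (1 + π₀ * x) ^ (-r') * Real.log (1 + π₀ * x)))
      (bound := fun x => K * δ ^ (-(p₂+1)) * min (x^2) 1 +
        (Cπ/(p₁-q)) * (Ioi (1:ℝ)).indicator (fun y => (1+y)^(1-q)) x)
      (Metric.ball_mem_nhds p hε) (Eventually.of_forall hmeasF) hFp_int hmeasF' hbound hbnd_int hdiff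
  -- nonnegativity of the integrand
  have hnonneg : ∀ᵐ x ∂μ, 0 ≤ π₀ * x * (1 + π₀ * x) ^ (-p) * Real.log (1 + π₀ * x) := by
    filter_upwards [haeμ] with x hu
    have hu0 : (0:ℝ) < 1 + π₀ * x := lt_of_lt_of_le hδ0 hu
    have hrp := Real.rpow_nonneg hu0.le (-p)
    rcases le_or_gt 1 (1 + π₀ * x) with h | h
    · have h1 : 0 ≤ π₀ * x := by linarith
      exact mul_nonneg (mul_nonneg h1 hrp) (Real.log_nonneg h)
    · have h1 : π₀ * x ≤ 0 := by linarith
      have h2 : Real.log (1 + π₀ * x) ≤ 0 := Real.log_nonpos hu0.le h.le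
      nlinarith [mul_nonneg (mul_nonneg (neg_nonneg.2 h1) hrp) (neg_nonneg.2 h2)]
  have hIpos : 0 ≤ ∫ x, π₀ * x * (1 + π₀ * x) ^ (-p) * Real.log (1 + π₀ * x) ∂μ :=
    integral_nonneg_of_ae hnonneg
  have hπ₀sq : 0 < π₀^2 := by rw [← sq_abs]; exact pow_pos hπ₀abs 2
  refine ⟨?_, ?_, ?_, ?_⟩
  · have h : Integrable (fun x => π₀ * x * (1 + π₀ * x) ^ (-p) * Real.log (1 + π₀ * x)) μ :=
      hint.neg.congr (Eventually.of_forall fun x => by simp)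
    rw [hμ_def] at h
    exact h
  · have hlin : HasDerivAt (fun q' : ℝ => π₀ * b - q' * π₀ ^ 2 * c) (0 - 1 * π₀^2 * c) p :=
      (hasDerivAt_const p (π₀ * b)).sub (((hasDerivAt_id p).mul_const (π₀^2)).mul_const c)
    have htot := hlin.add hderiv
    refine htot.congr_deriv ?_
    rw [integral_neg]
    ring
  · linarith [hIpos]
  · intro hcpos
    nlinarith [hIpos, mul_pos hπ₀sq hcpos]
end

section
/- Let p ∈ (0,1), N ∈ ℕ, and let Z_0, …, Z_{N−1} be independent identically distributed random variables on a probability space (Ω, F, P) with Z_0 ≥ −1 almost surely and E[(1 + Z_0)^{1−p}] < ∞. For i = 0, …, N−1 let F_i be the σ-algebra generated by Z_0, …, Z_{i−1} (with F_0 trivial). Then the supremum over all strategies (π_0, …, π_{N−1}), where each π_i : Ω → [0,1] is F_i-measurable, of E[∏_{i=0}^{N−1} (1 + π_i Z_i)^{1−p}] equals ( max_{π ∈ [0,1]} E[(1 + π Z_0)^{1−p}] )^N; moreover the maximum over π ∈ [0,1] is attained, and the constant strategy π_i ≡ π*, with π* a maximizer of π ↦ E[(1 + π Z_0)^{1−p}]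 on [0,1], attains the supremum. -/
open MeasureTheory Set Filter
open scoped ENNReal Topology

private lemma stmt15_rpow_cont {e : ℝ} (he : 0 < e) : Continuous fun t : ℝ => t ^ e :=
  continuous_iff_continuousAt.2 fun x => Real.continuousAt_rpow_const x e (Or.inr he.le)

private lemma stmt15_base_bound {π z : ℝ} (hπ : π ∈ Icc (0:ℝ) 1) (hz : -1 ≤ z) :
    0 ≤ 1 + π * z ∧ 1 + π * z ≤ 1 + max 0 z := by
  obtain ⟨h0, h1⟩ := hπ
  constructor
  · nlinarith [mul_le_mul_of_nonneg_left hz h0]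
  · rcases le_total z 0 with h | h
    · have h2 : π * z ≤ 0 := mul_nonpos_of_nonneg_of_nonpos h0 h
      have h3 : (0:ℝ) ≤ max 0 z := le_max_left 0 z
      linarith
    · have h2 : π * z ≤ z := by nlinarith
      have h3 : z ≤ max 0 z := le_max_right 0 z
      linarith

private lemma stmt15_rpow_le_bound {e π z : ℝ} (he : 0 ≤ e) (hπ : π ∈ Icc (0:ℝ) 1)
    (hz : -1 ≤ z) : (1 + π * z) ^ e ≤ (1 + max 0 z) ^ e :=
  Real.rpow_le_rpow (stmt15_base_bound hπ hz).1 (stmt15_base_bound hπ hz).2 he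

private lemma stmt15_maxpow_le {e z : ℝ} (hz : -1 ≤ z) :
    (1 + max 0 z) ^ e ≤ 1 + (1 + z) ^ e := by
  rcases le_total z 0 with h | h
  · rw [max_eq_left h, add_zero, Real.one_rpow]
    have : (0:ℝ) ≤ (1 + z) ^ e := Real.rpow_nonneg (by linarith) e
    linarith
  · rw [max_eq_right h]
    linarith

private lemma stmt15_exists_max {Ω : Type*} [MeasurableSpace Ω] {μ : Measure Ω}
    [IsProbabilityMeasure μ] {e : ℝ} (he : 0 < e) {W : Ω → ℝ} (hW : Measurable W)
    (hge : ∀ᵐ ω ∂μ, -1 ≤ W ω) (hint : Integrable (fun ω => (1 + W ω) ^ e) μ) :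
    ∃ πs ∈ Icc (0:ℝ) 1, ∀ t ∈ Icc (0:ℝ) 1,
      ∫ ω, (1 + t * W ω) ^ e ∂μ ≤ ∫ ω, (1 + πs * W ω) ^ e ∂μ := by
  set pr : ℝ → ℝ := fun t => max 0 (min 1 t) with hprdef
  have hpr : Continuous pr := continuous_const.max (continuous_const.min continuous_id)
  have hprmem : ∀ t, pr t ∈ Icc (0:ℝ) 1 :=
    fun t => ⟨le_max_left _ _, max_le zero_le_one (min_le_left _ _)⟩
  have hpr_eq : ∀ t ∈ Icc (0:ℝ) 1, pr t = t := fun t ht => by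
    rw [hprdef]; simp only [min_eq_right ht.2, max_eq_right ht.1]
  have hcont : Continuous fun t => ∫ ω, (1 + pr t * W ω) ^ e ∂μ := by
    apply continuous_of_dominated (bound := fun ω => 1 + (1 + W ω) ^ e)
    · intro t
      exact (Measurable.aestronglyMeasurable (by fun_prop))
    · intro t
      filter_upwards [hge] with ω hω
      rw [Real.norm_eq_abs,
        abs_of_nonneg (Real.rpow_nonneg (stmt15_base_bound (hprmem t) hω).1 e)]
      exact (stmt15_rpow_le_bound he.le (hprmem t) hω).trans (stmt15_maxpow_le hω)
    · exact (integrable_const (1:ℝ)).add hint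
    · filter_upwards with ω
      exact (stmt15_rpow_cont he).comp (continuous_const.add (hpr.mul continuous_const))
  obtain ⟨πs, hmem, hmax⟩ :=
    isCompact_Icc.exists_isMaxOn (nonempty_Icc.2 zero_le_one) hcont.continuousOn
  refine ⟨πs, hmem, fun t ht => ?_⟩
  have h1 := isMaxOn_iff.1 hmax t ht
  rw [hpr_eq t ht, hpr_eq πs hmem] at h1
  exact h1

private lemma stmt15_key_step {Ω : Type*} {m : MeasurableSpace Ω}
    [inst : MeasurableSpace Ω] {μ : Measure Ω}
    [IsProbabilityMeasure μ] {e : ℝ} (he : 0 < e)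
    {Y : Ω → ℝ} (hY : Measurable Y)
    (hIndep : ProbabilityTheory.Indep m (MeasurableSpace.comap Y Real.measurableSpace) μ)
    (hYge : ∀ᵐ ω ∂μ, -1 ≤ Y ω)
    (hYint : Integrable (fun ω => (1 + Y ω) ^ e) μ)
    {G : Ω → ℝ} (hGm : Measurable[m] G) (hG : Measurable G)
    (hGpos : 0 ≤ᵐ[μ] G) (hGint : Integrable G μ)
    {π : Ω → ℝ} (hπm : Measurable[m] π) (hπ : Measurable π)
    (hπmem : ∀ ω, π ω ∈ Icc (0:ℝ) 1)
    {M : ℝ} (hM : ∀ t ∈ Icc (0:ℝ) 1, ∫ ω, (1 + t * Y ω) ^ e ∂μ ≤ M) :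
    Integrable (fun ω => G ω * (1 + π ω * Y ω) ^ e) μ ∧
      ∫ ω, G ω * (1 + π ω * Y ω) ^ e ∂μ ≤ (∫ ω, G ω ∂μ) * M := by
  classical
  set X : Ω → ℝ × ℝ := fun ω => (G ω, π ω) with hXdef
  have hXm : Measurable[m] X := hGm.prodMk hπm
  have hXmeas : Measurable X := hG.prodMk hπ
  have hYc : Measurable[MeasurableSpace.comap Y Real.measurableSpace] Y :=
    Measurable.of_comap_le le_rfl
  have hIndepFun : ProbabilityTheory.IndepFun X Y μ := by
    have h1 : ProbabilityTheory.Indep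
        (MeasurableSpace.comap X Prod.instMeasurableSpace)
        (MeasurableSpace.comap Y Real.measurableSpace) μ :=
      ProbabilityTheory.indep_of_indep_of_le_left hIndep hXm.comap_le
    exact h1
  have hmap : μ.map (fun ω => (X ω, Y ω)) = (μ.map X).prod (μ.map Y) :=
    (ProbabilityTheory.indepFun_iff_map_prod_eq_prod_map_map
      hXmeas.aemeasurable hY.aemeasurable).1 hIndepFun
  haveI : IsProbabilityMeasure (μ.map X) := Measure.isProbabilityMeasure_map hXmeas.aemeasurable
  haveI : IsProbabilityMeasure (μ.map Y) := Measure.isProbabilityMeasure_map hY.aemeasurable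
  set φ : (ℝ × ℝ) × ℝ → ℝ := fun q => q.1.1 * (1 + q.1.2 * q.2) ^ e with hφdef
  have hφmeas : Measurable φ := by
    apply (measurable_fst.comp measurable_fst).mul
    fun_prop
  have hs : MeasurableSet {x : ℝ × ℝ | 0 ≤ x.1 ∧ x.2 ∈ Icc (0:ℝ) 1} := by
    apply MeasurableSet.inter
    · exact measurable_fst measurableSet_Ici
    · exact measurable_snd measurableSet_Icc
  have ht : MeasurableSet {y : ℝ | -1 ≤ y} := measurableSet_Ici
  have hρae : ∀ᵐ x ∂μ.map X, 0 ≤ x.1 ∧ x.2 ∈ Icc (0:ℝ) 1 := by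
    rw [ae_map_iff hXmeas.aemeasurable hs]
    filter_upwards [hGpos] with ω hω
    exact ⟨hω, hπmem ω⟩
  have hνae : ∀ᵐ y ∂μ.map Y, -1 ≤ y := by
    rw [ae_map_iff hY.aemeasurable ht]
    exact hYge
  have hfstmap : ((μ.map X).prod (μ.map Y)).map Prod.fst = μ.map X := by
    rw [Measure.map_fst_prod, measure_univ, one_smul]
  have hsndmap : ((μ.map X).prod (μ.map Y)).map Prod.snd = μ.map Y := by
    rw [Measure.map_snd_prod, measure_univ, one_smul]
  have h1 : ∀ᵐ q ∂(μ.map X).prod (μ.map Y), 0 ≤ q.1.1 ∧ q.1.2 ∈ Icc (0:ℝ) 1 :=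
    (ae_map_iff measurable_fst.aemeasurable hs).1 (by rw [hfstmap]; exact hρae)
  have h2 : ∀ᵐ q ∂(μ.map X).prod (μ.map Y), -1 ≤ q.2 :=
    (ae_map_iff measurable_snd.aemeasurable ht).1 (by rw [hsndmap]; exact hνae)
  -- integrability of the dominating product function
  have hBμ : Integrable (fun ω => (1 + max 0 (Y ω)) ^ e) μ := by
    refine Integrable.mono' ((integrable_const (1:ℝ)).add hYint)
      (Measurable.aestronglyMeasurable (by fun_prop)) ?_
    filter_upwards [hYge] with ω hω
    rw [Real.norm_eq_abs, abs_of_nonneg (Real.rpow_nonneg (by positivity) e)]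
    exact stmt15_maxpow_le hω
  have hBint : Integrable (fun y => (1 + max 0 y) ^ e) (μ.map Y) := by
    rw [integrable_map_measure (Measurable.aestronglyMeasurable (by fun_prop))
      hY.aemeasurable]
    exact hBμ
  have hfstint : Integrable (fun x : ℝ × ℝ => |x.1|) (μ.map X) := by
    rw [integrable_map_measure (Measurable.aestronglyMeasurable (by fun_prop))
      hXmeas.aemeasurable]
    exact hGint.abs
  have hψint : Integrable (fun q : (ℝ × ℝ) × ℝ => |q.1.1| * (1 + max 0 q.2) ^ e)
      ((μ.map X).prod (μ.map Y)) := hfstint.mul_prod hBint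
  have hφint : Integrable φ ((μ.map X).prod (μ.map Y)) := by
    refine hψint.mono' hφmeas.aestronglyMeasurable ?_
    filter_upwards [h1, h2] with q hq1 hq2
    have hb := stmt15_base_bound hq1.2 hq2
    rw [hφdef, Real.norm_eq_abs, abs_mul, abs_of_nonneg (Real.rpow_nonneg hb.1 e)]
    exact mul_le_mul_of_nonneg_left (stmt15_rpow_le_bound he.le hq1.2 hq2) (abs_nonneg _)
  have hpairae : AEMeasurable (fun ω => (X ω, Y ω)) μ :=
    (hXmeas.prodMk hY).aemeasurable
  constructor
  · have hφint' : Integrable φ (μ.map fun ω => (X ω, Y ω)) := by rw [hmap]; exact hφint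
    have := (integrable_map_measure hφmeas.aestronglyMeasurable hpairae).1 hφint'
    exact this
  · have heq1 : ∫ ω, G ω * (1 + π ω * Y ω) ^ e ∂μ
        = ∫ q, φ q ∂(μ.map fun ω => (X ω, Y ω)) := by
      rw [integral_map hpairae hφmeas.aestronglyMeasurable]
    have heq2 : ∫ q, φ q ∂(μ.map fun ω => (X ω, Y ω))
        = ∫ x, ∫ y, φ (x, y) ∂(μ.map Y) ∂(μ.map X) := by
      rw [hmap]; exact integral_prod φ hφint
    rw [heq1, heq2]
    have hLHSint : Integrable (fun x => ∫ y, φ (x, y) ∂(μ.map Y)) (μ.map X) :=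
      hφint.integral_prod_left
    have hfst1 : Integrable (fun x : ℝ × ℝ => x.1) (μ.map X) := by
      rw [integrable_map_measure (Measurable.aestronglyMeasurable (by fun_prop))
        hXmeas.aemeasurable]
      exact hGint
    have hRHSint : Integrable (fun x : ℝ × ℝ => x.1 * M) (μ.map X) := hfst1.mul_const M
    have hinner : ∀ᵐ x ∂μ.map X, ∫ y, φ (x, y) ∂(μ.map Y) ≤ x.1 * M := by
      filter_upwards [hρae] with x hx
      have heq3 : ∫ y, φ (x, y) ∂(μ.map Y)
          = x.1 * ∫ y, (1 + x.2 * y) ^ e ∂(μ.map Y) := by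
        rw [hφdef]
        exact integral_const_mul x.1 _
      have heq4 : ∫ y, (1 + x.2 * y) ^ e ∂(μ.map Y)
          = ∫ ω, (1 + x.2 * Y ω) ^ e ∂μ := by
        rw [integral_map hY.aemeasurable (Measurable.aestronglyMeasurable (by fun_prop))]
      rw [heq3, heq4]
      exact mul_le_mul_of_nonneg_left (hM x.2 hx.2) hx.1
    calc ∫ x, ∫ y, φ (x, y) ∂(μ.map Y) ∂(μ.map X)
        ≤ ∫ x, x.1 * M ∂(μ.map X) := integral_mono_ae hLHSint hRHSint hinner
      _ = (∫ x, (x : ℝ × ℝ).1 ∂(μ.map X)) * M := integral_mul_const M _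
      _ = (∫ ω, G ω ∂μ) * M := by
          congr 1
          rw [integral_map hXmeas.aemeasurable
            (Measurable.aestronglyMeasurable (by fun_prop))]

theorem stmt15 {Ω : Type*} [MeasurableSpace Ω] (μ : Measure Ω) [IsProbabilityMeasure μ]
    (p : ℝ) (hp : p ∈ Ioo (0:ℝ) 1) (N : ℕ)
    (Z : ℕ → Ω → ℝ) (hZmeas : ∀ i, Measurable (Z i))
    (hindep : ProbabilityTheory.iIndepFun (m := fun _ => Real.measurableSpace) Z μ)
    (hident : ∀ i, ProbabilityTheory.IdentDistrib (Z i) (Z 0) μ μ)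
    (hZge : ∀ᵐ ω ∂μ, -1 ≤ Z 0 ω)
    (hZint : Integrable (fun ω => (1 + Z 0 ω) ^ (1 - p)) μ) :
    ∃ πs ∈ Icc (0:ℝ) 1,
      (∀ π ∈ Icc (0:ℝ) 1,
        ∫ ω, (1 + π * Z 0 ω) ^ (1 - p) ∂μ ≤ ∫ ω, (1 + πs * Z 0 ω) ^ (1 - p) ∂μ) ∧
      sSup {v : ℝ | ∃ πf : ℕ → Ω → ℝ,
          (∀ i < N,
            Measurable[⨆ j ∈ Finset.range i, MeasurableSpace.comap (Z j) Real.measurableSpace]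
              (πf i)) ∧
          (∀ i < N, ∀ ω, πf i ω ∈ Icc (0:ℝ) 1) ∧
          v = ∫ ω, ∏ i ∈ Finset.range N, (1 + πf i ω * Z i ω) ^ (1 - p) ∂μ}
        = (∫ ω, (1 + πs * Z 0 ω) ^ (1 - p) ∂μ) ^ N ∧
      ∫ ω, ∏ i ∈ Finset.range N, (1 + πs * Z i ω) ^ (1 - p) ∂μ
        = (∫ ω, (1 + πs * Z 0 ω) ^ (1 - p) ∂μ) ^ N := by
  obtain ⟨hp0, hp1⟩ := hp
  have he : 0 < 1 - p := by linarith
  obtain ⟨πs, hπsmem, hπsmax⟩ := stmt15_exists_max he (hZmeas 0) hZge hZint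
  refine ⟨πs, hπsmem, hπsmax, ?_⟩
  set M := ∫ ω, (1 + πs * Z 0 ω) ^ (1 - p) ∂μ with hMdef
  -- transfer facts from Z 0 to Z i
  have hZge' : ∀ i, ∀ᵐ ω ∂μ, -1 ≤ Z i ω := fun i =>
    (hident i).symm.ae_snd (p := fun x => -1 ≤ x) measurableSet_Ici hZge
  have hId : ∀ (i : ℕ) (t : ℝ), ProbabilityTheory.IdentDistrib
      (fun ω => (1 + t * Z i ω) ^ (1 - p)) (fun ω => (1 + t * Z 0 ω) ^ (1 - p)) μ μ :=
    fun i t => (hident i).comp (u := fun z : ℝ => (1 + t * z) ^ (1 - p)) (by fun_prop)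
  have hZint' : ∀ i, Integrable (fun ω => (1 + Z i ω) ^ (1 - p)) μ := fun i =>
    (((hident i).comp (u := fun z : ℝ => (1 + z) ^ (1 - p)) (by fun_prop)).integrable_iff).2
      hZint
  have hM_i : ∀ (i : ℕ), ∀ t ∈ Icc (0:ℝ) 1, ∫ ω, (1 + t * Z i ω) ^ (1 - p) ∂μ ≤ M :=
    fun i t ht => by rw [(hId i t).integral_eq]; exact hπsmax t ht
  have hMconst : ∀ i : ℕ, ∫ ω, (1 + πs * Z i ω) ^ (1 - p) ∂μ = M :=
    fun i => (hId i πs).integral_eq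
  have hM1 : (1:ℝ) ≤ M := by
    have h := hπsmax 0 ⟨le_rfl, zero_le_one⟩
    simpa using h
  have hM0 : (0:ℝ) ≤ M := zero_le_one.trans hM1
  -- the filtration
  have h𝔊le : ∀ n : ℕ,
      (⨆ j ∈ Finset.range n, MeasurableSpace.comap (Z j) Real.measurableSpace)
        ≤ ‹MeasurableSpace Ω› := fun n =>
    iSup₂_le fun j _ => (hZmeas j).comap_le
  have h𝔊mono : ∀ {a b : ℕ}, a ≤ b →
      (⨆ j ∈ Finset.range a, MeasurableSpace.comap (Z j) Real.measurableSpace)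
        ≤ ⨆ j ∈ Finset.range b, MeasurableSpace.comap (Z j) Real.measurableSpace :=
    fun {a b} hab => iSup₂_le fun j hj =>
      le_iSup_of_le j (le_iSup_of_le
        (Finset.mem_range.2 ((Finset.mem_range.1 hj).trans_le hab)) le_rfl)
  have hZ𝔊 : ∀ {j n : ℕ}, j < n →
      Measurable[⨆ j ∈ Finset.range n, MeasurableSpace.comap (Z j) Real.measurableSpace]
        (Z j) := fun {j n} hj =>
    Measurable.of_comap_le (le_iSup_of_le j (le_iSup_of_le (Finset.mem_range.2 hj) le_rfl))
  have hindep𝔊 : ∀ n : ℕ, ProbabilityTheory.Indep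
      (⨆ j ∈ Finset.range n, MeasurableSpace.comap (Z j) Real.measurableSpace)
      (MeasurableSpace.comap (Z n) Real.measurableSpace) μ := by
    intro n
    have hii : ProbabilityTheory.iIndep
        (fun i => MeasurableSpace.comap (Z i) Real.measurableSpace) μ := hindep
    have h := ProbabilityTheory.indep_biSup_compl (fun i => (hZmeas i).comap_le) hii
      {i | i < n}
    have hle1 : (⨆ j ∈ Finset.range n, MeasurableSpace.comap (Z j) Real.measurableSpace)
        ≤ ⨆ i ∈ {i : ℕ | i < n}, MeasurableSpace.comap (Z i) Real.measurableSpace :=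
      iSup₂_le fun j hj =>
        le_iSup_of_le j (le_iSup_of_le (Finset.mem_range.1 hj) le_rfl)
    have hle2 : MeasurableSpace.comap (Z n) Real.measurableSpace
        ≤ ⨆ i ∈ {i : ℕ | i < n}ᶜ, MeasurableSpace.comap (Z i) Real.measurableSpace :=
      le_iSup_of_le n (le_iSup_of_le (by simp) le_rfl)
    exact ProbabilityTheory.indep_of_indep_of_le_left
      (ProbabilityTheory.indep_of_indep_of_le_right h hle2) hle1
  -- upper bound by induction
  have main : ∀ (πf : ℕ → Ω → ℝ),
      (∀ i < N, Measurable[⨆ j ∈ Finset.range i,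
        MeasurableSpace.comap (Z j) Real.measurableSpace] (πf i)) →
      (∀ i < N, ∀ ω, πf i ω ∈ Icc (0:ℝ) 1) →
      ∀ n, n ≤ N →
        Integrable (fun ω => ∏ i ∈ Finset.range n, (1 + πf i ω * Z i ω) ^ (1 - p)) μ ∧
        Measurable[⨆ j ∈ Finset.range n, MeasurableSpace.comap (Z j) Real.measurableSpace]
          (fun ω => ∏ i ∈ Finset.range n, (1 + πf i ω * Z i ω) ^ (1 - p)) ∧
        (0 ≤ᵐ[μ] fun ω => ∏ i ∈ Finset.range n, (1 + πf i ω * Z i ω) ^ (1 - p)) ∧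
        ∫ ω, ∏ i ∈ Finset.range n, (1 + πf i ω * Z i ω) ^ (1 - p) ∂μ ≤ M ^ n := by
    intro πf hπfm hπfmem n
    induction n with
    | zero =>
      intro _
      simp only [Finset.range_zero, Finset.prod_empty]
      exact ⟨integrable_const 1, measurable_const,
        Filter.Eventually.of_forall fun _ => zero_le_one, by simp⟩
    | succ n ih =>
      intro hn
      have hnN : n < N := hn
      obtain ⟨ihint, ihmeas, ihpos, ihle⟩ := ih (Nat.le_of_succ_le hn)
      have hπfn : Measurable (πf n) :=
        (hπfm n hnN).mono (h𝔊le n) le_rfl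
      have hFn : Measurable (fun ω => ∏ i ∈ Finset.range n, (1 + πf i ω * Z i ω) ^ (1 - p)) :=
        ihmeas.mono (h𝔊le n) le_rfl
      have hkey := stmt15_key_step he (hZmeas n) (hindep𝔊 n) (hZge' n) (hZint' n)
        ihmeas hFn ihpos ihint (hπfm n hnN) hπfn (hπfmem n hnN) (hM_i n)
      refine ⟨?_, ?_, ?_, ?_⟩
      · simp only [Finset.prod_range_succ]
        exact hkey.1
      · simp only [Finset.prod_range_succ]
        refine Measurable.mul (ihmeas.mono (h𝔊mono (Nat.le_succ n)) le_rfl) ?_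
        have h1 : Measurable[⨆ j ∈ Finset.range (n+1),
            MeasurableSpace.comap (Z j) Real.measurableSpace]
            (fun ω => 1 + πf n ω * Z n ω) :=
          Measurable.const_add
            (((hπfm n hnN).mono (h𝔊mono (Nat.le_succ n)) le_rfl).mul
              (hZ𝔊 (Nat.lt_succ_self n))) 1
        have h2 : Measurable fun y : ℝ => y ^ (1 - p) := by fun_prop
        exact h2.comp h1
      · simp only [Finset.prod_range_succ]
        filter_upwards [ihpos, hZge' n] with ω hω1 hω2
        exact mul_nonneg hω1
          (Real.rpow_nonneg (stmt15_base_bound (hπfmem n hnN ω) hω2).1 _)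
      · simp only [Finset.prod_range_succ]
        refine hkey.2.trans ?_
        calc (∫ ω, ∏ i ∈ Finset.range n, (1 + πf i ω * Z i ω) ^ (1 - p) ∂μ) * M
            ≤ M ^ n * M := mul_le_mul_of_nonneg_right ihle hM0
          _ = M ^ (n + 1) := (pow_succ M n).symm
  -- constant strategy equality by induction
  have hconst : ∀ n : ℕ,
      ∫ ω, ∏ i ∈ Finset.range n, (1 + πs * Z i ω) ^ (1 - p) ∂μ = M ^ n := by
    intro n
    induction n with
    | zero => simp
    | succ n ih =>
      have hfmeas' : ∀ i : ℕ, Measurable fun ω => (1 + πs * Z i ω) ^ (1 - p) := fun i => by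
        have h2 : Measurable fun y : ℝ => (1 + πs * y) ^ (1 - p) := by fun_prop
        exact h2.comp (hZmeas i)
      have hiIndep : ProbabilityTheory.iIndepFun (m := fun _ => Real.measurableSpace)
          (fun i ω => (1 + πs * Z i ω) ^ (1 - p)) μ :=
        hindep.comp (fun _ z => (1 + πs * z) ^ (1 - p)) (fun _ => by fun_prop)
      have hIndepFun := hiIndep.indepFun_prod_range_succ hfmeas' n
      have hXmeas' : Measurable (∏ j ∈ Finset.range n,
          fun ω => (1 + πs * Z j ω) ^ (1 - p)) := by
        rw [show (∏ j ∈ Finset.range n, fun ω => (1 + πs * Z j ω) ^ (1 - p))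
            = fun ω => ∏ j ∈ Finset.range n, (1 + πs * Z j ω) ^ (1 - p) from
          funext fun ω => Finset.prod_apply ω _ _]
        exact Finset.measurable_prod _ fun i _ => hfmeas' i
      have hmul := hIndepFun.integral_mul_eq_mul_integral hXmeas'.aestronglyMeasurable
        (hfmeas' n).aestronglyMeasurable
      calc ∫ ω, ∏ i ∈ Finset.range (n+1), (1 + πs * Z i ω) ^ (1 - p) ∂μ
          = ∫ ω, (∏ j ∈ Finset.range n, fun ω' => (1 + πs * Z j ω') ^ (1 - p)) ω
              * (1 + πs * Z n ω) ^ (1 - p) ∂μ := by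
            congr 1
            funext ω
            rw [Finset.prod_apply, Finset.prod_range_succ]
        _ = (∫ ω, (∏ j ∈ Finset.range n, fun ω' => (1 + πs * Z j ω') ^ (1 - p)) ω ∂μ)
              * ∫ ω, (1 + πs * Z n ω) ^ (1 - p) ∂μ := hmul
        _ = M ^ n * M := by
            rw [hMconst n]
            congr 1
            rw [show (fun ω => (∏ j ∈ Finset.range n,
                fun ω' => (1 + πs * Z j ω') ^ (1 - p)) ω)
                = fun ω => ∏ j ∈ Finset.range n, (1 + πs * Z j ω) ^ (1 - p) from
              funext fun ω => Finset.prod_apply ω _ _]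
            exact ih
        _ = M ^ (n + 1) := (pow_succ M n).symm
  refine ⟨?_, hconst N⟩
  have hmem : M ^ N ∈ {v : ℝ | ∃ πf : ℕ → Ω → ℝ,
      (∀ i < N, Measurable[⨆ j ∈ Finset.range i,
        MeasurableSpace.comap (Z j) Real.measurableSpace] (πf i)) ∧
      (∀ i < N, ∀ ω, πf i ω ∈ Icc (0:ℝ) 1) ∧
      v = ∫ ω, ∏ i ∈ Finset.range N, (1 + πf i ω * Z i ω) ^ (1 - p) ∂μ} :=
    ⟨fun _ _ => πs, fun i _ => measurable_const, fun i _ ω => hπsmem, (hconst N).symm⟩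
  have hub : ∀ v ∈ {v : ℝ | ∃ πf : ℕ → Ω → ℝ,
      (∀ i < N, Measurable[⨆ j ∈ Finset.range i,
        MeasurableSpace.comap (Z j) Real.measurableSpace] (πf i)) ∧
      (∀ i < N, ∀ ω, πf i ω ∈ Icc (0:ℝ) 1) ∧
      v = ∫ ω, ∏ i ∈ Finset.range N, (1 + πf i ω * Z i ω) ^ (1 - p) ∂μ}, v ≤ M ^ N := by
    rintro v ⟨πf, hme, hmem', rfl⟩
    exact (main πf hme hmem' N le_rfl).2.2.2
  exact le_antisymm (csSup_le ⟨M ^ N, hmem⟩ hub) (le_csSup ⟨M ^ N, hub⟩ hmem)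
end
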